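/- Let Ω ⊂ ℝ² be a domain contained in the union R of two perpendicular closed strips S₁ = ℝ × [0,d] and S₂ = [0,d] × ℝ, and let u be continuous on closure(Ω), subharmonic (Δu ≥ 0 in the classical sense, u ∈ C²) in Ω, with u ≤ 0 on ∂Ω and u bounded above. Then u ≤ 0 in Ω. -/

import Mathlib

open Real

/-- Second directional derivative of `f` at `x` in directions `v`, `w`. -/
noncomputable def secondDeriv (f : EuclideanSpace ℝ (Fin 2) → ℝ)
    (x v w : EuclideanSpace ℝ (Fin 2)) : ℝ :=
  fderiv ℝ (fun y => fderiv ℝ f y v) x w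

section Aux
noncomputable section

abbrev E2 := EuclideanSpace ℝ (Fin 2)
def P2 (i : Fin 2) : E2 →L[ℝ] ℝ := EuclideanSpace.proj i

lemma P2_single (i j : Fin 2) (a : ℝ) :
    P2 i (EuclideanSpace.single j a) = if i = j then a else 0 := by
  simp [P2, EuclideanSpace.single_apply, eq_comm]

/-! ### Differentiability toolkit -/

lemma diffAt_fderiv_apply {f : E2 → ℝ} {U : Set E2} (hU : IsOpen U) (hf : ContDiffOn ℝ 2 f U)
    {x : E2} (hx : x ∈ U) (v : E2) :
    DifferentiableAt ℝ (fun y => fderiv ℝ f y v) x := by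
  have hcd : ContDiffAt ℝ 2 f x := hf.contDiffAt (hU.mem_nhds hx)
  have h1 : ContDiffAt ℝ 1 (fderiv ℝ f) x := hcd.fderiv_right (by norm_num)
  have h2 : DifferentiableAt ℝ (fderiv ℝ f) x := h1.differentiableAt (by norm_num)
  exact ((ContinuousLinearMap.apply ℝ ℝ v).differentiableAt).comp x h2

lemma diffAt_fderiv_apply' {f : E2 → ℝ} (hf : ContDiff ℝ 2 f) (x v : E2) :
    DifferentiableAt ℝ (fun y => fderiv ℝ f y v) x :=
  diffAt_fderiv_apply isOpen_univ hf.contDiffOn (Set.mem_univ x) v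

lemma sd_add {U : Set E2} (hU : IsOpen U) {x : E2} (hx : x ∈ U) {f g : E2 → ℝ}
    (hf : ContDiffOn ℝ 2 f U) (hg : ContDiff ℝ 2 g) (v w : E2) :
    fderiv ℝ (fun y => fderiv ℝ (fun z => f z + g z) y v) x w
      = fderiv ℝ (fun y => fderiv ℝ f y v) x w + fderiv ℝ (fun y => fderiv ℝ g y v) x w := by
  have hfd : ∀ y ∈ U, DifferentiableAt ℝ f y := fun y hy =>
    (hf.differentiableOn (by norm_num)).differentiableAt (hU.mem_nhds hy)
  have hgd : Differentiable ℝ g := hg.differentiable (by norm_num)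
  have hev : (fun y => fderiv ℝ (fun z => f z + g z) y v)
      =ᶠ[nhds x] fun y => fderiv ℝ f y v + fderiv ℝ g y v := by
    filter_upwards [hU.eventually_mem hx] with y hy
    rw [fderiv_fun_add (hfd y hy) (hgd y)]
    simp
  rw [hev.fderiv_eq,
    fderiv_fun_add (diffAt_fderiv_apply hU hf hx v) (diffAt_fderiv_apply' hg x v)]
  simp

lemma sd_smul (a : ℝ) {h : E2 → ℝ} (hh : ContDiff ℝ 2 h) (v w x : E2) :
    fderiv ℝ (fun y => fderiv ℝ (fun z => a * h z) y v) x w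
      = a * fderiv ℝ (fun y => fderiv ℝ h y v) x w := by
  have hhd : Differentiable ℝ h := hh.differentiable (by norm_num)
  have hev : (fun y => fderiv ℝ (fun z => a * h z) y v) = fun y => a * fderiv ℝ h y v := by
    funext y
    rw [fderiv_const_mul (hhd y)]
    simp
  rw [hev, fderiv_const_mul (diffAt_fderiv_apply' hh x v)]
  simp

lemma sd_add_const (C : ℝ) (f : E2 → ℝ) (v w x : E2) :
    fderiv ℝ (fun y => fderiv ℝ (fun z => f z + C) y v) x w
      = fderiv ℝ (fun y => fderiv ℝ f y v) x w := by
  have h : (fun y => fderiv ℝ (fun z => f z + C) y v) = fun y => fderiv ℝ f y v := by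
    funext y
    rw [fderiv_add_const]
  rw [h]

lemma sd_combo {U : Set E2} (hU : IsOpen U) {x : E2} (hx : x ∈ U)
    {u h1 h2 q : E2 → ℝ} (hu : ContDiffOn ℝ 2 u U) (hh1 : ContDiff ℝ 2 h1)
    (hh2 : ContDiff ℝ 2 h2) (hq : ContDiff ℝ 2 q) (a b c C : ℝ) (v w : E2) :
    fderiv ℝ (fun y => fderiv ℝ (fun z => u z + a * h1 z + b * h2 z + c * q z + C) y v) x w
      = fderiv ℝ (fun y => fderiv ℝ u y v) x w + a * fderiv ℝ (fun y => fderiv ℝ h1 y v) x w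
        + b * fderiv ℝ (fun y => fderiv ℝ h2 y v) x w
        + c * fderiv ℝ (fun y => fderiv ℝ q y v) x w := by
  have c1 : ContDiffOn ℝ 2 (fun z => u z + a * h1 z) U := hu.add (contDiff_const.mul hh1).contDiffOn
  have c2 : ContDiffOn ℝ 2 (fun z => u z + a * h1 z + b * h2 z) U :=
    c1.add (contDiff_const.mul hh2).contDiffOn
  rw [sd_add_const C (fun z => u z + a * h1 z + b * h2 z + c * q z) v w x,
    sd_add hU hx c2 (contDiff_const.mul hq) v w,
    sd_add hU hx c1 (contDiff_const.mul hh2) v w,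
    sd_add hU hx hu (contDiff_const.mul hh1) v w,
    sd_smul a hh1 v w x, sd_smul b hh2 v w x, sd_smul c hq v w x]

/-! ### The key local lemma: no interior local max where the Laplacian is positive -/

lemma no_local_max {f : E2 → ℝ} {U : Set E2} (hU : IsOpen U) {x : E2} (hx : x ∈ U)
    (hf : ContDiffOn ℝ 2 f U) (e : E2)
    (hpos : 0 < fderiv ℝ (fun y => fderiv ℝ f y e) x e) (hmax : IsLocalMax f x) : False := by
  have hfd : ∀ y ∈ U, DifferentiableAt ℝ f y := fun y hy =>
    (hf.differentiableOn (by norm_num)).differentiableAt (hU.mem_nhds hy)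
  set ℓ : ℝ → E2 := fun t => x + t • e with hℓdef
  have hℓd : ∀ t : ℝ, HasDerivAt ℓ e t := fun t => by
    have h := ((hasDerivAt_id t).smul_const e).const_add x
    rw [one_smul] at h
    exact h
  have hℓ0 : ℓ 0 = x := by simp [hℓdef]
  have hℓtend : Filter.Tendsto ℓ (nhds 0) (nhds x) := by
    rw [← hℓ0]; exact (hℓd 0).continuousAt.tendsto
  set φ : ℝ → ℝ := fun t => f (ℓ t) with hφdef
  set ψ : ℝ → ℝ := fun t => fderiv ℝ f (ℓ t) e with hψdef
  have hDψ : HasDerivAt ψ (fderiv ℝ (fun y => fderiv ℝ f y e) x e) 0 := by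
    have h1 : DifferentiableAt ℝ (fun y => fderiv ℝ f y e) x := diffAt_fderiv_apply hU hf hx e
    have h2 := (hℓ0 ▸ h1.hasFDerivAt).comp_hasDerivAt 0 (hℓd 0)
    rw [hℓ0] at h2
    exact h2
  have hφd : ∀ t : ℝ, ℓ t ∈ U → HasDerivAt φ (ψ t) t := fun t ht =>
    ((hfd _ ht).hasFDerivAt.comp_hasDerivAt t (hℓd t))
  have hφmax : ∀ᶠ t in nhds (0:ℝ), φ t ≤ f x := hℓtend.eventually hmax
  have hψ0 : ψ 0 = 0 := by
    have h0 : IsLocalMax φ 0 := by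
      unfold IsLocalMax IsMaxFilter
      simpa [hφdef, hℓ0] using hφmax
    exact h0.hasDerivAt_eq_zero (hφd 0 (by rw [hℓ0]; exact hx))
  have hUev : ∀ᶠ t in nhds (0:ℝ), ℓ t ∈ U := hℓtend.eventually (hU.eventually_mem hx)
  have hslope : ∀ᶠ t in nhdsWithin (0:ℝ) {(0:ℝ)}ᶜ, 0 < slope ψ 0 t :=
    (hasDerivAt_iff_tendsto_slope.mp hDψ).eventually (eventually_gt_nhds hpos)
  have hslope' : ∀ᶠ t in nhds (0:ℝ), t ≠ 0 → 0 < slope ψ 0 t := by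
    rw [eventually_nhdsWithin_iff] at hslope
    exact hslope.mono (by intro t h ht; exact h ht)
  have hall := (hUev.and hφmax).and hslope'
  obtain ⟨δ, hδ, hδall⟩ := Metric.eventually_nhds_iff.mp hall
  set t0 := δ/2 with ht0def
  have ht0 : 0 < t0 := by positivity
  have hmem : ∀ t : ℝ, t ∈ Set.Icc (0:ℝ) t0 →
      (ℓ t ∈ U ∧ φ t ≤ f x) ∧ (t ≠ 0 → 0 < slope ψ 0 t) := by
    intro t ht
    apply hδall
    rw [Real.dist_eq]
    have h1 : |t - 0| = t := by rw [sub_zero, abs_of_nonneg ht.1]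
    rw [h1]; linarith [ht.2]
  have hψpos : ∀ t : ℝ, t ∈ Set.Ioo (0:ℝ) t0 → 0 < ψ t := by
    intro t ht
    have h := (hmem t ⟨le_of_lt ht.1, le_of_lt ht.2⟩).2 (ne_of_gt ht.1)
    rw [slope_def_field, hψ0, sub_zero, sub_zero] at h
    have h2 := mul_pos h ht.1
    rwa [div_mul_cancel₀ _ (ne_of_gt ht.1)] at h2
  have hcont : ContinuousOn φ (Set.Icc 0 t0) := by
    intro t ht
    exact (hφd t (hmem t ht).1.1).continuousAt.continuousWithinAt
  obtain ⟨c, hc, hceq⟩ := exists_hasDerivAt_eq_slope φ ψ ht0 hcont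
    (fun t ht => hφd t (hmem t ⟨le_of_lt ht.1, le_of_lt ht.2⟩).1.1)
  have hφ0 : φ 0 = f x := by rw [hφdef]; simp [hℓ0]
  have hle : φ t0 ≤ f x := (hmem t0 ⟨le_of_lt ht0, le_refl _⟩).1.2
  have hcle : ψ c ≤ 0 := by
    rw [hceq]
    apply div_nonpos_of_nonpos_of_nonneg <;> [linarith [hφ0, hle]; linarith]
  linarith [hψpos c hc]

/-! ### The quadratic function -/

def q2 : E2 → ℝ := fun y => y 0 ^ 2 + y 1 ^ 2

lemma contDiff_q2 : ContDiff ℝ 2 q2 :=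
  (((P2 0).contDiff.pow 2).add ((P2 1).contDiff.pow 2) : )

lemma hasF_sq (i : Fin 2) (x : E2) :
    HasFDerivAt (fun y : E2 => y i ^ 2) ((2 * x i ^ 1) • (P2 i : E2 →L[ℝ] ℝ)) x := by
  have h := (hasDerivAt_pow 2 (x i)).comp_hasFDerivAt x (P2 i).hasFDerivAt
  have h2 : HasFDerivAt (fun y : E2 => y i ^ 2) _ x := h
  exact h2.congr_fderiv (by norm_num)

lemma hasF_q2 (x : E2) :
    HasFDerivAt q2 ((2 * x 0 ^ 1) • (P2 0 : E2 →L[ℝ] ℝ) + (2 * x 1 ^ 1) • (P2 1 : E2 →L[ℝ] ℝ)) x :=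
  (hasF_sq 0 x).add (hasF_sq 1 x)

lemma fderiv_q2_apply (i : Fin 2) (y : E2) :
    fderiv ℝ q2 y (EuclideanSpace.single i 1) = 2 * y i := by
  rw [(hasF_q2 y).fderiv]
  fin_cases i <;> simp [P2_single]

lemma secondDeriv_q2 (i : Fin 2) (x : E2) :
    secondDeriv q2 x (EuclideanSpace.single i 1) (EuclideanSpace.single i 1) = 2 := by
  unfold secondDeriv
  have h1 : (fun y : E2 => fderiv ℝ q2 y (EuclideanSpace.single i 1)) = fun y : E2 => 2 * P2 i y := by
    funext y; rw [fderiv_q2_apply]; rfl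
  rw [h1, ((P2 i).hasFDerivAt.const_mul 2).fderiv]
  simp [P2_single]

/-! ### The barrier functions -/

def barf (k : ℝ) (i j : Fin 2) : E2 → ℝ :=
  fun y => Real.cosh (k * y i) * Real.cos (k * y j - π/4)

lemma contDiff_barf (k : ℝ) (i j : Fin 2) : ContDiff ℝ 2 (barf k i j) := by
  have hi : ContDiff ℝ 2 (fun y : E2 => k * y i) := contDiff_const.mul (P2 i).contDiff
  have hj : ContDiff ℝ 2 (fun y : E2 => k * y j - π/4) :=
    (contDiff_const.mul (P2 j).contDiff).sub contDiff_const
  exact (Real.contDiff_cosh.comp hi).mul (Real.contDiff_cos.comp hj)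

lemma hasF_cosh (k : ℝ) (i : Fin 2) (x : E2) :
    HasFDerivAt (fun y : E2 => Real.cosh (k * y i))
      (Real.sinh (k * x i) • (k • (P2 i : E2 →L[ℝ] ℝ))) x :=
  ((Real.hasDerivAt_cosh (k * x i)).comp_hasFDerivAt x ((P2 i).hasFDerivAt.const_mul k) :)

lemma hasF_sinh (k : ℝ) (i : Fin 2) (x : E2) :
    HasFDerivAt (fun y : E2 => Real.sinh (k * y i))
      (Real.cosh (k * x i) • (k • (P2 i : E2 →L[ℝ] ℝ))) x :=
  ((Real.hasDerivAt_sinh (k * x i)).comp_hasFDerivAt x ((P2 i).hasFDerivAt.const_mul k) :)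

lemma hasF_cos (k c : ℝ) (j : Fin 2) (x : E2) :
    HasFDerivAt (fun y : E2 => Real.cos (k * y j - c))
      ((-Real.sin (k * x j - c)) • (k • (P2 j : E2 →L[ℝ] ℝ))) x :=
  ((Real.hasDerivAt_cos (k * x j - c)).comp_hasFDerivAt x (((P2 j).hasFDerivAt.const_mul k).sub_const c) :)

lemma hasF_sin (k c : ℝ) (j : Fin 2) (x : E2) :
    HasFDerivAt (fun y : E2 => Real.sin (k * y j - c))
      ((Real.cos (k * x j - c)) • (k • (P2 j : E2 →L[ℝ] ℝ))) x :=
  ((Real.hasDerivAt_sin (k * x j - c)).comp_hasFDerivAt x (((P2 j).hasFDerivAt.const_mul k).sub_const c) :)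

lemma hasF_barf (k : ℝ) (i j : Fin 2) (x : E2) :
    HasFDerivAt (barf k i j)
      (Real.cosh (k * x i) • ((-Real.sin (k * x j - π/4)) • (k • (P2 j : E2 →L[ℝ] ℝ))) +
       Real.cos (k * x j - π/4) • (Real.sinh (k * x i) • (k • (P2 i : E2 →L[ℝ] ℝ)))) x :=
  (hasF_cosh k i x).mul (hasF_cos k (π/4) j x)

lemma fderiv_barf_i (k : ℝ) (i j : Fin 2) (hij : i ≠ j) (y : E2) :
    fderiv ℝ (barf k i j) y (EuclideanSpace.single i 1)
      = k * Real.sinh (k * y i) * Real.cos (k * y j - π/4) := by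
  rw [(hasF_barf k i j y).fderiv]
  simp [P2_single, hij, Ne.symm hij]
  ring

lemma fderiv_barf_j (k : ℝ) (i j : Fin 2) (hij : i ≠ j) (y : E2) :
    fderiv ℝ (barf k i j) y (EuclideanSpace.single j 1)
      = -(k * Real.cosh (k * y i) * Real.sin (k * y j - π/4)) := by
  rw [(hasF_barf k i j y).fderiv]
  simp [P2_single, hij, Ne.symm hij]
  ring

lemma secondDeriv_barf_ii (k : ℝ) (i j : Fin 2) (hij : i ≠ j) (x : E2) :
    secondDeriv (barf k i j) x (EuclideanSpace.single i 1) (EuclideanSpace.single i 1)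
      = k^2 * Real.cosh (k * x i) * Real.cos (k * x j - π/4) := by
  unfold secondDeriv
  have h1 : (fun y : E2 => fderiv ℝ (barf k i j) y (EuclideanSpace.single i 1))
      = fun y : E2 => k * (Real.sinh (k * y i) * Real.cos (k * y j - π/4)) := by
    funext y; rw [fderiv_barf_i k i j hij y]; ring
  rw [h1]
  have hF : HasFDerivAt (fun y : E2 => k * (Real.sinh (k * y i) * Real.cos (k * y j - π/4))) _ x :=
    (((hasF_sinh k i x).mul (hasF_cos k (π/4) j x)).const_mul k)
  rw [hF.fderiv]
  simp [P2_single, hij, Ne.symm hij]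
  ring

lemma secondDeriv_barf_jj (k : ℝ) (i j : Fin 2) (hij : i ≠ j) (x : E2) :
    secondDeriv (barf k i j) x (EuclideanSpace.single j 1) (EuclideanSpace.single j 1)
      = -(k^2 * Real.cosh (k * x i) * Real.cos (k * x j - π/4)) := by
  unfold secondDeriv
  have h1 : (fun y : E2 => fderiv ℝ (barf k i j) y (EuclideanSpace.single j 1))
      = fun y : E2 => (-k) * (Real.cosh (k * y i) * Real.sin (k * y j - π/4)) := by
    funext y; rw [fderiv_barf_j k i j hij y]; ring
  rw [h1]
  have hF : HasFDerivAt (fun y : E2 => (-k) * (Real.cosh (k * y i) * Real.sin (k * y j - π/4))) _ x :=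
    (((hasF_cosh k i x).mul (hasF_sin k (π/4) j x)).const_mul (-k))
  rw [hF.fderiv]
  simp [P2_single, hij, Ne.symm hij]
  ring

/-! ### Elementary bounds -/

lemma norm_sq_E2 (x : E2) : ‖x‖ ^ 2 = x 0 ^ 2 + x 1 ^ 2 := by
  rw [EuclideanSpace.norm_eq, Real.sq_sqrt (by positivity)]
  simp [Fin.sum_univ_two, sq_abs]

lemma norm_le_abs_add (x : E2) : ‖x‖ ≤ |x 0| + |x 1| := by
  have h := norm_sq_E2 x
  nlinarith [norm_nonneg x, abs_nonneg (x 0), abs_nonneg (x 1), sq_abs (x 0), sq_abs (x 1)]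

lemma half_le_cosh (t : ℝ) : (1 + |t|) / 2 ≤ Real.cosh t := by
  rw [← Real.cosh_abs, Real.cosh_eq]
  have h1 := Real.add_one_le_exp |t|
  have h2 := Real.exp_pos (-|t|)
  linarith

lemma cos_ge_half {t : ℝ} (h : |t| ≤ π / 4) : 1 / 2 ≤ Real.cos t := by
  have h1 := Real.one_sub_sq_div_two_le_cos (x := t)
  have hpi : π ≤ 4 := by linarith [Real.pi_le_four]
  have ht1 : |t| ≤ 1 := by linarith
  have : t ^ 2 ≤ 1 := by nlinarith [sq_abs t, abs_nonneg t]
  linarith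

lemma barrier_lower {k a b : ℝ} (hk : 0 < k) (hb0 : 0 ≤ b) (hbp : k * b ≤ π/2) :
    (1 + k * |a|) / 4 ≤ Real.cosh (k*a) * Real.cos (k*b - π/4)
      + Real.cosh (k*b) * Real.cos (k*a - π/4) + Real.cosh (π/2) := by
  have hkb0 : 0 ≤ k * b := by positivity
  have harg : |k * b - π/4| ≤ π/4 := by
    rw [abs_le]; constructor <;> linarith
  have hcos1 : 1/2 ≤ Real.cos (k*b - π/4) := cos_ge_half harg
  have habs : |k * a| = k * |a| := by rw [abs_mul, abs_of_pos hk]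
  have hcosh1 : (1 + k * |a|)/2 ≤ Real.cosh (k * a) := by
    rw [← habs]; exact half_le_cosh (k * a)
  have hpos1 : (0:ℝ) ≤ (1 + k * |a|)/2 := by positivity
  have t1 : (1 + k * |a|)/4 ≤ Real.cosh (k*a) * Real.cos (k*b - π/4) := by
    have := mul_le_mul hcosh1 hcos1 (by norm_num) (le_of_lt (Real.cosh_pos (k*a)))
    linarith
  have t2 : -(Real.cosh (π/2)) ≤ Real.cosh (k*b) * Real.cos (k*a - π/4) := by
    have h1 : Real.cosh (k*b) ≤ Real.cosh (π/2) := by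
      rw [Real.cosh_le_cosh]
      rw [abs_of_nonneg hkb0, abs_of_nonneg (by positivity : (0:ℝ) ≤ π/2)]
      exact hbp
    have h2 := Real.neg_one_le_cos (k*a - π/4)
    nlinarith [Real.cosh_pos (k*b)]
  linarith

end
end Aux

set_option maxHeartbeats 1000000 in
theorem stmt_18 (d : ℝ) (hd : 0 < d)
    (Ω : Set (EuclideanSpace ℝ (Fin 2))) (hΩo : IsOpen Ω) (hΩc : IsConnected Ω)
    (hlat : Ω ⊆ {x | (0 ≤ x 1 ∧ x 1 ≤ d) ∨ (0 ≤ x 0 ∧ x 0 ≤ d)})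
    (u : EuclideanSpace ℝ (Fin 2) → ℝ)
    (hu2 : ContDiffOn ℝ 2 u Ω) (huc : ContinuousOn u (closure Ω))
    (hsub : ∀ x ∈ Ω,
      0 ≤ secondDeriv u x (EuclideanSpace.single 0 1) (EuclideanSpace.single 0 1) +
          secondDeriv u x (EuclideanSpace.single 1 1) (EuclideanSpace.single 1 1))
    (hbd : ∀ x ∈ frontier Ω, u x ≤ 0)
    (hub : ∃ M : ℝ, ∀ x ∈ Ω, u x ≤ M) :
    ∀ x ∈ Ω, u x ≤ 0 := by
  have hπ := Real.pi_pos
  obtain ⟨k, hkdef⟩ : ∃ k : ℝ, k = π / (2*d) := ⟨_, rfl⟩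
  have hk : 0 < k := by rw [hkdef]; positivity
  have hkd : k * d = π/2 := by rw [hkdef]; field_simp
  have hΛclosed : IsClosed {x : E2 | (0 ≤ x 1 ∧ x 1 ≤ d) ∨ (0 ≤ x 0 ∧ x 0 ≤ d)} := by
    have h1 : IsClosed ((fun x : E2 => x 1) ⁻¹' Set.Icc 0 d) := isClosed_Icc.preimage (P2 1).continuous
    have h0 : IsClosed ((fun x : E2 => x 0) ⁻¹' Set.Icc 0 d) := isClosed_Icc.preimage (P2 0).continuous
    have heq : {x : E2 | (0 ≤ x 1 ∧ x 1 ≤ d) ∨ (0 ≤ x 0 ∧ x 0 ≤ d)}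
        = ((fun x : E2 => x 1) ⁻¹' Set.Icc 0 d) ∪ ((fun x : E2 => x 0) ⁻¹' Set.Icc 0 d) := by
      ext y; simp [Set.mem_Icc]
    rw [heq]; exact h1.union h0
  have hclos : ∀ z ∈ closure Ω, (0 ≤ z 1 ∧ z 1 ≤ d) ∨ (0 ≤ z 0 ∧ z 0 ≤ d) :=
    fun z hz => closure_minimal hlat hΛclosed hz
  obtain ⟨hbF, hbfdef⟩ : ∃ f : E2 → ℝ,
      f = fun y => barf k 0 1 y + barf k 1 0 y + Real.cosh (π/2) := ⟨_, rfl⟩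
  have hbf_lower : ∀ y : E2, ((0 ≤ y 1 ∧ y 1 ≤ d) ∨ (0 ≤ y 0 ∧ y 0 ≤ d)) →
      (1 + k * (‖y‖ - d)) / 4 ≤ hbF y ∧ (1:ℝ)/4 ≤ hbF y := by
    intro y hy
    have hn : ‖y‖ ≤ |y 0| + |y 1| := norm_le_abs_add y
    have hBval : hbF y = Real.cosh (k * y 0) * Real.cos (k * y 1 - π/4)
        + Real.cosh (k * y 1) * Real.cos (k * y 0 - π/4) + Real.cosh (π/2) := by
      rw [hbfdef]; rfl
    rw [hBval]
    rcases hy with h | h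
    · have hB := barrier_lower (a := y 0) (b := y 1) hk h.1
        (by rw [← hkd]; exact mul_le_mul_of_nonneg_left h.2 hk.le)
      have h1 : |y 1| ≤ d := abs_le.mpr ⟨by linarith, h.2⟩
      have h2 : ‖y‖ - d ≤ |y 0| := by linarith
      have h3 : k * (‖y‖ - d) ≤ k * |y 0| := mul_le_mul_of_nonneg_left h2 hk.le
      have h4 : 0 ≤ k * |y 0| := mul_nonneg hk.le (abs_nonneg _)
      constructor <;> linarith
    · have hB := barrier_lower (a := y 1) (b := y 0) hk h.1
        (by rw [← hkd]; exact mul_le_mul_of_nonneg_left h.2 hk.le)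
      have h1 : |y 0| ≤ d := abs_le.mpr ⟨by linarith, h.2⟩
      have h2 : ‖y‖ - d ≤ |y 1| := by linarith
      have h3 : k * (‖y‖ - d) ≤ k * |y 1| := mul_le_mul_of_nonneg_left h2 hk.le
      have h4 : 0 ≤ k * |y 1| := mul_nonneg hk.le (abs_nonneg _)
      constructor <;> linarith
  intro x hx
  have hb4 : (1:ℝ)/4 ≤ hbF x := (hbf_lower x (hlat hx)).2
  have hbposx : 0 < hbF x := by linarith
  have key : ∀ ε : ℝ, 0 < ε → u x ≤ ε * hbF x := by
    intro ε hε
    obtain ⟨M, hM⟩ := hub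
    obtain ⟨R, hRdef⟩ : ∃ R : ℝ, R = d + ‖x‖ + 1 + 4 * (|M| + 1)/(ε * k) := ⟨_, rfl⟩
    have hRq : 0 < 4 * (|M| + 1)/(ε * k) := by positivity
    have hR1 : ‖x‖ < R := by rw [hRdef]; linarith
    have hR0 : 0 < R := lt_of_le_of_lt (norm_nonneg x) hR1
    have hkA : k * (4*(|M|+1)/(ε*k)) = 4*(|M|+1)/ε := by
      field_simp
    have hRgrow : ∀ y ∈ Ω, R ≤ ‖y‖ → u y - ε * hbF y < 0 := by
      intro y hy hRy
      have hb := (hbf_lower y (hlat hy)).1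
      have h1 : 4*(|M|+1)/(ε*k) ≤ ‖y‖ - d := by
        rw [hRdef] at hRy; linarith [norm_nonneg x]
      have h2 : 4*(|M|+1)/ε ≤ k * (‖y‖ - d) := by
        rw [← hkA]; exact mul_le_mul_of_nonneg_left h1 hk.le
      have h3 : (1 + 4*(|M|+1)/ε)/4 ≤ hbF y := by linarith
      have h4 : ε * ((1 + 4*(|M|+1)/ε)/4) ≤ ε * hbF y := mul_le_mul_of_nonneg_left h3 hε.le
      have h5 : ε * ((1 + 4*(|M|+1)/ε)/4) = ε/4 + (|M|+1) := by field_simp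
      have hMy : u y ≤ M := hM y hy
      have h6 : M ≤ |M| := le_abs_self M
      rw [h5] at h4
      linarith
    have hq2x : 0 ≤ q2 x := by
      have h : q2 x = ‖x‖^2 := (norm_sq_E2 x).symm
      rw [h]; positivity
    have key2 : ∀ η : ℝ, 0 < η → u x - ε * hbF x ≤ η * R^2 := by
      intro η hη
      obtain ⟨D, hDdef⟩ : ∃ D : Set E2, D = Ω ∩ Metric.ball 0 R := ⟨_, rfl⟩
      have hDsub : D ⊆ Ω := by rw [hDdef]; exact Set.inter_subset_left
      have hDball : D ⊆ Metric.ball 0 R := by rw [hDdef]; exact Set.inter_subset_right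
      have hDopen : IsOpen D := by rw [hDdef]; exact hΩo.inter Metric.isOpen_ball
      have hDx : x ∈ D := by rw [hDdef]; exact ⟨hx, by rwa [mem_ball_zero_iff]⟩
      obtain ⟨Cc, hCcdef⟩ : ∃ c : ℝ, c = -(ε * Real.cosh (π/2)) := ⟨_, rfl⟩
      obtain ⟨g, hgdef⟩ : ∃ g : E2 → ℝ,
          g = fun z => u z + (-ε) * barf k 0 1 z + (-ε) * barf k 1 0 z + η * q2 z + Cc := ⟨_, rfl⟩
      have hgval : ∀ z, g z = u z - ε * hbF z + η * q2 z := by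
        intro z; simp only [hgdef, hbfdef, hCcdef]; ring
      have hclosD_Ω : closure D ⊆ closure Ω := closure_mono hDsub
      have hclosD_ball : closure D ⊆ Metric.closedBall 0 R :=
        (closure_mono hDball).trans Metric.closure_ball_subset_closedBall
      have hgc : ContinuousOn g (closure D) := by
        rw [hgdef]
        exact (((((huc.mono hclosD_Ω).add
          (continuous_const.mul (contDiff_barf k 0 1).continuous).continuousOn).add
          (continuous_const.mul (contDiff_barf k 1 0).continuous).continuousOn).add
          (continuous_const.mul contDiff_q2.continuous).continuousOn).add continuousOn_const)
      have hcomp : IsCompact (closure D) :=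
        (Metric.isBounded_ball.subset hDball).isCompact_closure
      obtain ⟨z, hzc, hzmax⟩ := hcomp.exists_isMaxOn ⟨x, subset_closure hDx⟩ hgc
      have hgb : g z ≤ η * R^2 := by
        by_cases hzD : z ∈ D
        · exfalso
          have hzΩ : z ∈ Ω := hDsub hzD
          have hloc : IsLocalMax g z := by
            filter_upwards [hDopen.eventually_mem hzD] with y hy
            exact hzmax (subset_closure hy)
          have hg2 : ContDiffOn ℝ 2 g Ω := by
            rw [hgdef]
            exact ((((hu2.add (contDiff_const.mul (contDiff_barf k 0 1)).contDiffOn).add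
              (contDiff_const.mul (contDiff_barf k 1 0)).contDiffOn).add
              (contDiff_const.mul contDiff_q2).contDiffOn).add contDiffOn_const)
          have hcombo : ∀ v : E2, secondDeriv g z v v
              = secondDeriv u z v v + (-ε) * secondDeriv (barf k 0 1) z v v
                + (-ε) * secondDeriv (barf k 1 0) z v v + η * secondDeriv q2 z v v := by
            intro v
            unfold secondDeriv
            rw [hgdef]
            exact sd_combo hΩo hzΩ hu2 (contDiff_barf k 0 1) (contDiff_barf k 1 0)
              contDiff_q2 (-ε) (-ε) η Cc v v
          have h01ii := secondDeriv_barf_ii k 0 1 (by decide) z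
          have h01jj := secondDeriv_barf_jj k 0 1 (by decide) z
          have h10ii := secondDeriv_barf_ii k 1 0 (by decide) z
          have h10jj := secondDeriv_barf_jj k 1 0 (by decide) z
          have hq0 := secondDeriv_q2 0 z
          have hq1 := secondDeriv_q2 1 z
          have hsum := hsub z hzΩ
          have hpos : 0 < secondDeriv g z (EuclideanSpace.single 0 1) (EuclideanSpace.single 0 1)
              + secondDeriv g z (EuclideanSpace.single 1 1) (EuclideanSpace.single 1 1) := by
            rw [hcombo (EuclideanSpace.single 0 1), hcombo (EuclideanSpace.single 1 1),
              h01ii, h01jj, h10ii, h10jj, hq0, hq1]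
            nlinarith [hsum, hη]
          rcases lt_or_ge 0 (secondDeriv g z (EuclideanSpace.single 0 1) (EuclideanSpace.single 0 1))
            with hgt | hle
          · exact no_local_max hΩo hzΩ hg2 _ hgt hloc
          · have h2 : 0 < secondDeriv g z (EuclideanSpace.single 1 1) (EuclideanSpace.single 1 1) := by
              linarith
            exact no_local_max hΩo hzΩ hg2 _ h2 hloc
        · have hzΩc : z ∈ closure Ω := hclosD_Ω hzc
          have hzR : ‖z‖ ≤ R := by
            have h := hclosD_ball hzc
            rwa [Metric.mem_closedBall, dist_zero_right] at h
          have hq2z : q2 z ≤ R^2 := by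
            have h : q2 z = ‖z‖^2 := (norm_sq_E2 z).symm
            rw [h]; nlinarith [norm_nonneg z]
          have hbz : 0 ≤ hbF z := by linarith [(hbf_lower z (hclos z hzΩc)).2]
          rw [hgval z]
          have hηq : η * q2 z ≤ η * R^2 := mul_le_mul_of_nonneg_left hq2z hη.le
          by_cases hzΩ : z ∈ Ω
          · have hzball : z ∉ Metric.ball (0:E2) R := fun hb => hzD (by rw [hDdef]; exact ⟨hzΩ, hb⟩)
            have hzR' : R ≤ ‖z‖ := by
              by_contra hcon
              exact hzball (mem_ball_zero_iff.mpr (lt_of_not_ge hcon))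
            have := hRgrow z hzΩ hzR'
            linarith
          · have hzfr : z ∈ frontier Ω := by
              rw [hΩo.frontier_eq]
              exact ⟨hzΩc, hzΩ⟩
            have hu0 : u z ≤ 0 := hbd z hzfr
            have hεb : 0 ≤ ε * hbF z := mul_nonneg hε.le hbz
            linarith
      have hgx : g x ≤ g z := hzmax (subset_closure hDx)
      rw [hgval x] at hgx
      linarith [mul_nonneg hη.le hq2x]
    by_contra hlt
    push_neg at hlt
    have hA : 0 < u x - ε * hbF x := by linarith
    have h := key2 ((u x - ε*hbF x)/(2*R^2)) (by positivity)
    have hcalc : (u x - ε*hbF x)/(2*R^2) * R^2 = (u x - ε*hbF x)/2 := by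
      field_simp
    rw [hcalc] at h
    linarith
  by_contra hpos0
  push_neg at hpos0
  have h := key (u x / (2 * hbF x)) (div_pos hpos0 (by linarith))
  have hcalc : u x / (2 * hbF x) * hbF x = u x / 2 := by
    field_simp
  rw [hcalc] at h
  linarith
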